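/- Let k ≥ 1 be an integer and 0 < T < ∞. Let h : (0,1] × (0,T) → ℝ be continuously differentiable in r, and define the energy density e(r,t) = (∂_r h(r,t))² + k²·sin²(h(r,t))/r². Assume the finite-energy bound E₀ := sup over t ∈ (0,T) of (1/2)·∫_{B²} e(|x|,t) dx < ∞, where B² is the open unit disc of ℝ². Then for every point x₀ of the closed unit disc with x₀ ≠ 0 and every ε > 0 there exists δ > 0 such that for every R with 0 < R < δ: limsup as t → T⁻ of (1/2)·∫_{B_R(x₀) ∩ B²} e(|x|,t) dx ≤ ε. -/

import Mathlib

open Real Set MeasureTheory Metric Filter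
open scoped ENNReal

-- rotation of the Euclidean plane by angle θ
noncomputable def planeRot (θ : ℝ) :
    EuclideanSpace ℝ (Fin 2) ≃ₗᵢ[ℝ] EuclideanSpace ℝ (Fin 2) :=
  (Complex.orthonormalBasisOneI.repr.symm.trans
    ((rotation (Circle.exp θ)).trans Complex.orthonormalBasisOneI.repr))

lemma planeRot_apply (θ : ℝ) (x : EuclideanSpace ℝ (Fin 2)) :
    planeRot θ x = Complex.orthonormalBasisOneI.repr
      (Complex.exp (θ * Complex.I) * Complex.orthonormalBasisOneI.repr.symm x) := by
  simp [planeRot, rotation_apply, LinearIsometryEquiv.trans_apply, Circle.coe_exp]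

lemma norm_exp_sub_exp (a b : ℝ) :
    ‖Complex.exp (a * Complex.I) - Complex.exp (b * Complex.I)‖
      = Real.sqrt (2 - 2 * Real.cos (a - b)) := by
  have h1 : Complex.exp (a * Complex.I) - Complex.exp (b * Complex.I)
      = Complex.exp (b * Complex.I) * (Complex.exp (((a - b : ℝ)) * Complex.I) - 1) := by
    rw [mul_sub, mul_one, ← Complex.exp_add]
    push_cast
    ring_nf
  have h2 : ‖Complex.exp (((a - b : ℝ)) * Complex.I) - 1‖ ^ 2
      = 2 - 2 * Real.cos (a - b) := by
    rw [Complex.sq_norm, Complex.normSq_apply, Complex.sub_re,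
      Complex.sub_im, Complex.exp_ofReal_mul_I_re, Complex.exp_ofReal_mul_I_im,
      Complex.one_re, Complex.one_im]
    nlinarith [Real.sin_sq_add_cos_sq (a - b)]
  have h3 : ‖Complex.exp (((a - b : ℝ)) * Complex.I) - 1‖
      = Real.sqrt (2 - 2 * Real.cos (a - b)) := by
    rw [← h2, Real.sqrt_sq (norm_nonneg _)]
  rw [h1, norm_mul]
  have : ‖Complex.exp ((b:ℂ) * Complex.I)‖ = 1 := Complex.norm_exp_ofReal_mul_I b
  rw [this, one_mul, h3]

-- distance between rotated copies of x₀
lemma dist_planeRot (a b : ℝ) (x₀ : EuclideanSpace ℝ (Fin 2)) :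
    dist (planeRot a x₀) (planeRot b x₀)
      = Real.sqrt (2 - 2 * Real.cos (a - b)) * ‖x₀‖ := by
  rw [dist_eq_norm, planeRot_apply, planeRot_apply, ← map_sub, ← sub_mul]
  rw [Complex.orthonormalBasisOneI.repr.norm_map, norm_mul, norm_exp_sub_exp]
  congr 1
  rw [Complex.orthonormalBasisOneI.repr.symm.norm_map]

lemma cos_bound {N : ℕ} (hN : 2 ≤ N) {m : ℝ} (hm1 : 1 ≤ m) (hm2 : m ≤ (N : ℝ) - 1) :
    Real.cos (2 * π / N * m) ≤ Real.cos (2 * π / N) := by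
  have hNpos : (0 : ℝ) < N := by positivity
  have ha0 : 0 < 2 * π / N := by positivity
  have haπ : 2 * π / N ≤ π := by
    rw [div_le_iff₀ hNpos]
    nlinarith [Real.pi_pos, (by exact_mod_cast hN : (2:ℝ) ≤ N)]
  have hφ1 : 2 * π / N ≤ 2 * π / N * m := by nlinarith
  have hφ2 : 2 * π / N * m ≤ 2 * π - 2 * π / N := by
    have : 2 * π / N * m ≤ 2 * π / N * ((N:ℝ) - 1) := by nlinarith
    calc 2 * π / N * m ≤ 2 * π / N * ((N:ℝ) - 1) := this
      _ = 2 * π - 2 * π / N := by field_simp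
  rcases le_or_gt (2 * π / N * m) π with hc | hc
  · exact Real.cos_le_cos_of_nonneg_of_le_pi ha0.le hc hφ1
  · rw [← Real.cos_two_pi_sub]
    exact Real.cos_le_cos_of_nonneg_of_le_pi ha0.le (by linarith) (by linarith)

-- rotation invariance of set lintegrals of radial functions
lemma lint_preimage (ρ : EuclideanSpace ℝ (Fin 2) ≃ₗᵢ[ℝ] EuclideanSpace ℝ (Fin 2))
    (f : EuclideanSpace ℝ (Fin 2) → ℝ≥0∞) (hf : ∀ x, f (ρ x) = f x)
    {S : Set (EuclideanSpace ℝ (Fin 2))} (hS : MeasurableSet S) :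
    ∫⁻ x in ρ ⁻¹' S, f x = ∫⁻ x in S, f x := by
  have hm : MeasurePreserving ρ := ρ.measurePreserving
  set m : EuclideanSpace ℝ (Fin 2) ≃ᵐ EuclideanSpace ℝ (Fin 2) :=
    ρ.toHomeomorph.toMeasurableEquiv with hmdef
  have hmap : Measure.map m volume = volume := hm.map_eq
  have hSp : MeasurableSet (ρ ⁻¹' S) := hS.preimage ρ.continuous.measurable
  calc ∫⁻ x in ρ ⁻¹' S, f x = ∫⁻ x, (ρ ⁻¹' S).indicator f x := by
        rw [lintegral_indicator hSp]
    _ = ∫⁻ x, S.indicator f (m x) := by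
        refine lintegral_congr fun x => ?_
        have hmx : m x = ρ x := rfl
        rw [hmx]
        by_cases hx : ρ x ∈ S
        · rw [Set.indicator_of_mem hx, Set.indicator_of_mem (mem_preimage.mpr hx), hf]
        · rw [Set.indicator_of_notMem hx, Set.indicator_of_notMem (show x ∉ ⇑ρ ⁻¹' S from hx)]
    _ = ∫⁻ x, S.indicator f x ∂(Measure.map m volume) := (lintegral_map_equiv _ m).symm
    _ = ∫⁻ x in S, f x := by rw [hmap, lintegral_indicator hS]
set_option maxHeartbeats 800000 in
/-- Paper's Lemma 4.1 (no concentration of energy away from the origin for `k`-equivariant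
solutions): if the radial energy density `e(r,t) = (∂_r h)² + k² sin²(h)/r²` has uniformly
bounded total energy over the unit disc, then around any point `x₀ ≠ 0` of the closed disc
the energy does not concentrate as `t → T⁻`. -/
theorem no_energy_concentration_away_from_origin
    (k : ℕ) (hk : 1 ≤ k) (T : ℝ) (hT : 0 < T)
    (h : ℝ × ℝ → ℝ)
    (hdiff : ∀ t ∈ Ioo (0:ℝ) T, ∀ r ∈ Ioc (0:ℝ) 1,
      DifferentiableWithinAt ℝ (fun r' => h (r', t)) (Ioc 0 1) r)
    (hderivcont : ∀ t ∈ Ioo (0:ℝ) T,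
      ContinuousOn (fun r => derivWithin (fun r' => h (r', t)) (Ioc 0 1) r) (Ioc 0 1))
    (e : ℝ → ℝ → ℝ)
    (he : ∀ r t, e r t =
      derivWithin (fun r' => h (r', t)) (Ioc 0 1) r ^ 2
        + (k : ℝ) ^ 2 * sin (h (r, t)) ^ 2 / r ^ 2)
    (E₀ : ℝ≥0∞) (hE₀ : E₀ ≠ ⊤)
    (hen : ∀ t ∈ Ioo (0:ℝ) T,
      2⁻¹ * ∫⁻ x in ball (0 : EuclideanSpace ℝ (Fin 2)) 1, ENNReal.ofReal (e ‖x‖ t) ≤ E₀) :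
    ∀ x₀ : EuclideanSpace ℝ (Fin 2), x₀ ∈ closedBall 0 1 → x₀ ≠ 0 →
      ∀ ε : ℝ, 0 < ε → ∃ δ : ℝ, 0 < δ ∧ ∀ R : ℝ, 0 < R → R < δ →
        Filter.limsup
          (fun t => 2⁻¹ * ∫⁻ x in ball x₀ R ∩ ball (0 : EuclideanSpace ℝ (Fin 2)) 1,
            ENNReal.ofReal (e ‖x‖ t))
          (nhdsWithin T (Iio T)) ≤ ENNReal.ofReal ε := by
  intro x₀ _hx₀mem hx₀ne ε hε
  have hx₀pos : 0 < ‖x₀‖ := norm_pos_iff.mpr hx₀ne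
  have hεe : ENNReal.ofReal ε ≠ 0 := (ENNReal.ofReal_pos.mpr hε).ne'
  obtain ⟨n, hn⟩ := ENNReal.exists_nat_gt (ENNReal.div_lt_top hE₀ hεe).ne
  set N := max n 2 with hNdef
  have hN2 : 2 ≤ N := le_max_right _ _
  have hNne : (N : ℝ≥0∞) ≠ 0 := by
    simp only [ne_eq, Nat.cast_eq_zero]; omega
  have hNnetop : (N : ℝ≥0∞) ≠ ⊤ := ENNReal.natCast_ne_top N
  have hNR : (0:ℝ) < N := by exact_mod_cast (by omega : 0 < N)
  have hEN : E₀ / N ≤ ENNReal.ofReal ε := by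
    rw [ENNReal.div_le_iff_le_mul (Or.inl hNne) (Or.inl hNnetop)]
    have h1 : E₀ < n * ENNReal.ofReal ε := by
      rw [← ENNReal.div_lt_iff (Or.inl hεe) (Or.inl ENNReal.ofReal_ne_top)]
      exact hn
    calc E₀ ≤ (n : ℝ≥0∞) * ENNReal.ofReal ε := h1.le
      _ ≤ ENNReal.ofReal ε * N := by
          rw [mul_comm]
          exact mul_le_mul_right (by exact_mod_cast Nat.cast_le.2 (le_max_left n 2)) _
  have h2πN : 0 < 2 * π / N := by positivity
  have hcoslt : Real.cos (2 * π / N) < 1 := by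
    have hlt : 2 * π / N < 2 * π := by
      rw [div_lt_iff₀ hNR]
      nlinarith [pi_pos, (show (2:ℝ) ≤ N by exact_mod_cast hN2)]
    rcases lt_or_eq_of_le (Real.cos_le_one (2 * π / N)) with hc | hc
    · exact hc
    · exfalso
      have := (Real.cos_eq_one_iff_of_lt_of_lt (by linarith) hlt).1 hc
      linarith
  set δ := Real.sqrt (2 - 2 * Real.cos (2 * π / N)) * ‖x₀‖ / 2 with hδdef
  have hδpos : 0 < δ := by
    apply div_pos _ two_pos
    exact mul_pos (Real.sqrt_pos.mpr (by linarith)) hx₀pos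
  refine ⟨δ, hδpos, ?_⟩
  intro R hR hRδ
  set θf : Fin N → ℝ := fun j => 2 * π / N * ((j : ℕ) : ℝ) with hθ
  set c : Fin N → EuclideanSpace ℝ (Fin 2) := fun j => planeRot (θf j) x₀ with hc
  set S : Fin N → Set (EuclideanSpace ℝ (Fin 2)) :=
    fun j => ball (c j) R ∩ ball 0 1 with hSdef
  have hSmeas : ∀ j, MeasurableSet (S j) := fun j =>
    measurableSet_ball.inter measurableSet_ball
  have hdist : ∀ i j : Fin N, i ≠ j → 2 * δ ≤ dist (c i) (c j) := by
    intro i j hij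
    have hij' : (i : ℕ) ≠ (j : ℕ) := fun hh => hij (Fin.ext hh)
    have h1m : (1:ℝ) ≤ |((i : ℕ) : ℝ) - ((j : ℕ) : ℝ)| := by
      have h' : (1:ℤ) ≤ |((i : ℕ) : ℤ) - ((j : ℕ) : ℤ)| :=
        Int.one_le_abs (sub_ne_zero.mpr (by exact_mod_cast hij'))
      exact_mod_cast h'
    have hmN : |((i : ℕ) : ℝ) - ((j : ℕ) : ℝ)| ≤ (N : ℝ) - 1 := by
      have hi : ((i : ℕ) : ℝ) < N := by exact_mod_cast i.isLt
      have hj : ((j : ℕ) : ℝ) < N := by exact_mod_cast j.isLt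
      have hi0 : (0:ℝ) ≤ ((i : ℕ) : ℝ) := Nat.cast_nonneg _
      have hj0 : (0:ℝ) ≤ ((j : ℕ) : ℝ) := Nat.cast_nonneg _
      have hi1 : ((i : ℕ) : ℝ) ≤ (N : ℝ) - 1 := by
        have h' : ((i : ℕ) : ℤ) ≤ (N : ℤ) - 1 := by
          have := i.isLt; omega
        exact_mod_cast h'
      have hj1 : ((j : ℕ) : ℝ) ≤ (N : ℝ) - 1 := by
        have h' : ((j : ℕ) : ℤ) ≤ (N : ℤ) - 1 := by
          have := j.isLt; omega
        exact_mod_cast h'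
      rw [abs_le]
      constructor <;> linarith
    have hcos : Real.cos (θf i - θf j) ≤ Real.cos (2 * π / N) := by
      have habs : θf i - θf j = 2 * π / N * (((i : ℕ) : ℝ) - ((j : ℕ) : ℝ)) := by
        rw [hθ]; ring
      rw [habs, ← Real.cos_abs, abs_mul, abs_of_pos h2πN]
      exact cos_bound hN2 h1m hmN
    rw [hc]
    simp only []
    rw [dist_planeRot]
    have hsq : Real.sqrt (2 - 2 * Real.cos (2 * π / N))
        ≤ Real.sqrt (2 - 2 * Real.cos (θf i - θf j)) :=
      Real.sqrt_le_sqrt (by linarith)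
    have h2δ : 2 * δ = Real.sqrt (2 - 2 * Real.cos (2 * π / N)) * ‖x₀‖ := by
      rw [hδdef]; ring
    rw [h2δ]
    exact mul_le_mul_of_nonneg_right hsq hx₀pos.le
  have hdisj : Pairwise (Function.onFun Disjoint S) := by
    intro i j hij
    have hb : Disjoint (ball (c i) R) (ball (c j) R) :=
      ball_disjoint_ball (by linarith [hdist i j hij])
    exact hb.mono inter_subset_left inter_subset_left
  have key : ∀ t ∈ Ioo (0:ℝ) T,
      2⁻¹ * ∫⁻ x in ball x₀ R ∩ ball (0 : EuclideanSpace ℝ (Fin 2)) 1,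
        ENNReal.ofReal (e ‖x‖ t) ≤ ENNReal.ofReal ε := by
    intro t ht
    set f : EuclideanSpace ℝ (Fin 2) → ℝ≥0∞ := fun x => ENNReal.ofReal (e ‖x‖ t) with hf
    have hrot : ∀ j : Fin N, ∫⁻ x in S j, f x
        = ∫⁻ x in ball x₀ R ∩ ball (0 : EuclideanSpace ℝ (Fin 2)) 1, f x := by
      intro j
      have hpre : (planeRot (θf j)) ⁻¹' (S j)
          = ball x₀ R ∩ ball (0 : EuclideanSpace ℝ (Fin 2)) 1 := by
        rw [hSdef]
        simp only [preimage_inter]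
        congr 1
        · ext x
          simp only [mem_preimage, mem_ball, hc]
          rw [(planeRot (θf j)).dist_map]
        · ext x
          simp only [mem_preimage, mem_ball, dist_zero_right]
          rw [(planeRot (θf j)).norm_map]
      rw [← hpre]
      exact (lint_preimage (planeRot (θf j)) f
        (fun x => by simp only [hf, (planeRot (θf j)).norm_map]) (hSmeas j)).symm
    have hsum : ∫⁻ x in ⋃ j, S j, f x
        = N * ∫⁻ x in ball x₀ R ∩ ball (0 : EuclideanSpace ℝ (Fin 2)) 1, f x := by
      rw [show (volume.restrict (⋃ j, S j))
            = Measure.sum (fun j => volume.restrict (S j)) from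
          Measure.restrict_iUnion hdisj hSmeas]
      rw [lintegral_sum_measure, tsum_fintype]
      simp only [hrot]
      rw [Finset.sum_const, Finset.card_univ, Fintype.card_fin, nsmul_eq_mul]
    have hle : (N : ℝ≥0∞) * ∫⁻ x in ball x₀ R ∩ ball (0 : EuclideanSpace ℝ (Fin 2)) 1, f x
        ≤ 2 * E₀ := by
      rw [← hsum]
      calc ∫⁻ x in ⋃ j, S j, f x
          ≤ ∫⁻ x in ball (0 : EuclideanSpace ℝ (Fin 2)) 1, f x :=
            lintegral_mono_set (iUnion_subset fun j => inter_subset_right)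
        _ = 2 * (2⁻¹ * ∫⁻ x in ball (0 : EuclideanSpace ℝ (Fin 2)) 1, f x) := by
            rw [← mul_assoc, ENNReal.mul_inv_cancel two_ne_zero ENNReal.ofNat_ne_top, one_mul]
        _ ≤ 2 * E₀ := mul_le_mul_right (hen t ht) 2
    have hI : ∫⁻ x in ball x₀ R ∩ ball (0 : EuclideanSpace ℝ (Fin 2)) 1, f x
        ≤ 2 * E₀ / N := by
      rw [ENNReal.le_div_iff_mul_le (Or.inl hNne) (Or.inl hNnetop), mul_comm]
      exact hle
    calc 2⁻¹ * ∫⁻ x in ball x₀ R ∩ ball (0 : EuclideanSpace ℝ (Fin 2)) 1, f x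
        ≤ 2⁻¹ * (2 * E₀ / N) := mul_le_mul_right hI _
      _ = E₀ / N := by
          rw [mul_div_assoc, ← mul_assoc, ENNReal.inv_mul_cancel two_ne_zero
            ENNReal.ofNat_ne_top, one_mul]
      _ ≤ ENNReal.ofReal ε := hEN
  have hev : ∀ᶠ t in nhdsWithin T (Iio T),
      2⁻¹ * ∫⁻ x in ball x₀ R ∩ ball (0 : EuclideanSpace ℝ (Fin 2)) 1,
        ENNReal.ofReal (e ‖x‖ t) ≤ ENNReal.ofReal ε := by
    filter_upwards [self_mem_nhdsWithin,
      (eventually_gt_nhds hT).filter_mono nhdsWithin_le_nhds] with t ht1 ht2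
    exact key t ⟨ht2, ht1⟩
  exact limsup_le_of_le (by isBoundedDefault) hev
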